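/- Let K be a field, n > 1, and a ∈ K[s]^n a nonzero row vector of degree d, with associated coefficient matrix A ∈ K^{(2d+1) × n(d+1)}. If b_1,...,b_l ∈ K^{n(d+1)} form a K-basis of ker(A), then syz(a) is generated as a K[s]-module by b_1^♭, ..., b_l^♭. -/

import Mathlib

open Polynomial
open scoped Classical

noncomputable section

/-- The degree of a polynomial vector: the maximum of the degrees of the entries. -/
def vdeg {K : Type*} [Field K] {n : ℕ} (h : Fin n → K[X]) : ℕ :=
  Finset.univ.sup fun i => (h i).natDegree

/-- The leading vector of a polynomial vector: the vector of coefficients of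
`s ^ (vdeg h)` in the entries. -/
def LV {K : Type*} [Field K] {n : ℕ} (h : Fin n → K[X]) : Fin n → K :=
  fun i => (h i).coeff (vdeg h)

/-- The syzygy module of a row vector `a` of polynomials. -/
def syz {K : Type*} [Field K] {n : ℕ} (a : Fin n → K[X]) :
    Submodule K[X] (Fin n → K[X]) where
  carrier := {h | ∑ i, a i * h i = 0}
  add_mem' := by
    intro x y hx hy
    simp only [Set.mem_setOf_eq] at *
    simp only [Pi.add_apply, mul_add, Finset.sum_add_distrib, hx, hy, add_zero]
  zero_mem' := by simp
  smul_mem' := by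
    intro c x hx
    simp only [Set.mem_setOf_eq] at *
    have h1 : ∑ i, a i * (c • x) i = c * ∑ i, a i * x i := by
      rw [Finset.mul_sum]
      refine Finset.sum_congr rfl fun i _ => ?_
      simp only [Pi.smul_apply, smul_eq_mul]
      ring
    rw [h1, hx, mul_zero]

/-- The coefficient matrix `A ∈ K^{(2d+1) × n(d+1)}` associated with a polynomial row
vector `a` of degree at most `d`:  `A_{k+1, i+jn} = c_{k-j,i}` where `c_m` is the vector of
coefficients of `s^m` in `a` (with `c_m = 0` for `m < 0` or `m > d`). -/
def coefA {K : Type*} [Field K] {n : ℕ} (d : ℕ) (hn : 0 < n) (a : Fin n → K[X]) :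
    Matrix (Fin (2*d+1)) (Fin (n*(d+1))) K :=
  Matrix.of fun k ℓ =>
    if (ℓ : ℕ) / n ≤ (k : ℕ) then
      (a ⟨(ℓ : ℕ) % n, Nat.mod_lt _ hn⟩).coeff ((k : ℕ) - (ℓ : ℕ) / n)
    else 0

/-- The `♭` isomorphism `K^{n(d+1)} → K[s]^n`: split `v` into `d+1` consecutive blocks
`w_0, …, w_d ∈ K^n` and form `∑_j s^j w_j`. -/
def flatv {K : Type*} [Field K] {n : ℕ} (d : ℕ) (v : Fin (n*(d+1)) → K) : Fin n → K[X] :=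
  fun i => ∑ j : Fin (d+1), C (v ⟨(i:ℕ) + (j:ℕ)*n, by
    calc (i:ℕ) + (j:ℕ)*n < n + (j:ℕ)*n := Nat.add_lt_add_right i.isLt _
      _ = n * ((j:ℕ)+1) := by ring
      _ ≤ n * (d+1) := Nat.mul_le_mul le_rfl j.isLt⟩) * X ^ (j:ℕ)

/-- The `♭` isomorphism `K^m → K[s]` for scalars. -/
def flat1 {K : Type*} [Field K] {m : ℕ} (w : Fin m → K) : K[X] :=
  ∑ k : Fin m, C (w k) * X ^ (k:ℕ)

/-- A column index `j` of a matrix is pivotal if the `j`-th column is not a `K`-linear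
combination of the columns of smaller index. -/
def Pivotal {K : Type*} [Field K] {m N : ℕ} (A : Matrix (Fin m) (Fin N) K) (j : Fin N) : Prop :=
  (fun k => A k j) ∉ Submodule.span K ((fun r : Fin N => fun k => A k r) '' {r | r < j})

/-- A basic non-pivotal index: the minimal non-pivotal index in its residue class modulo `n`. -/
def BasicNP {K : Type*} [Field K] {m N : ℕ} (n : ℕ) (A : Matrix (Fin m) (Fin N) K)
    (r : Fin N) : Prop :=
  ¬ Pivotal A r ∧ ∀ r' : Fin N, ¬ Pivotal A r' → (r':ℕ) % n = (r:ℕ) % n → r ≤ r'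

/-- `B` encodes, for each non-pivotal index `i`, the row-echelon null vector
`b_i = e_i − v_i`: `(b_i)_i = 1`, `(b_i)_j = −α_j` for pivotal `j < i` where
`A_{*i} = Σ α_j A_{*j}`, and all other entries vanish.  Equivalently, `b_i ∈ ker A`,
`(b_i)_i = 1` and `(b_i)_j = 0` unless `j = i` or `j` is pivotal with `j < i`. -/
def IsEchelonNull {K : Type*} [Field K] {m N : ℕ} (A : Matrix (Fin m) (Fin N) K)
    (B : Fin N → Fin N → K) : Prop :=
  ∀ i : Fin N, ¬ Pivotal A i →
    A.mulVec (B i) = 0 ∧ B i i = 1 ∧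
    ∀ j : Fin N, j ≠ i → ¬ (Pivotal A j ∧ j < i) → B i j = 0

/-- Shift an index by `t`, modulo the size (used only when `j + t` is in range). -/
def shiftIdx {N : ℕ} (j : Fin N) (t : ℕ) : Fin N :=
  ⟨((j:ℕ) + t) % N, Nat.mod_lt _ j.pos⟩
section Aux

variable {K : Type*} [Field K] {n : ℕ}

/-- The index equivalence `Fin n × Fin (d+1) ≃ Fin (n*(d+1))`, `(i,j) ↦ i + j*n`. -/
def idxE (n d : ℕ) (hn : 0 < n) : Fin n × Fin (d+1) ≃ Fin (n*(d+1)) where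
  toFun x := ⟨(x.1:ℕ) + (x.2:ℕ)*n, by
    calc (x.1:ℕ) + (x.2:ℕ)*n < n + (x.2:ℕ)*n := Nat.add_lt_add_right x.1.isLt _
      _ = n * ((x.2:ℕ)+1) := by ring
      _ ≤ n * (d+1) := Nat.mul_le_mul le_rfl x.2.isLt⟩
  invFun ℓ := (⟨(ℓ:ℕ) % n, Nat.mod_lt _ hn⟩,
    ⟨(ℓ:ℕ) / n, by
      rw [Nat.div_lt_iff_lt_mul hn]
      calc (ℓ:ℕ) < n*(d+1) := ℓ.isLt
        _ = (d+1)*n := Nat.mul_comm _ _⟩)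
  left_inv := fun ⟨i, j⟩ => by
    ext
    · show ((i:ℕ) + (j:ℕ)*n) % n = i
      rw [Nat.add_mul_mod_self_right, Nat.mod_eq_of_lt i.isLt]
    · show ((i:ℕ) + (j:ℕ)*n) / n = j
      rw [Nat.add_mul_div_right _ _ hn, Nat.div_eq_of_lt i.isLt, Nat.zero_add]
  right_inv := fun ℓ => by
    ext
    show (ℓ:ℕ) % n + (ℓ:ℕ)/n * n = ℓ
    exact Nat.mod_add_div' _ _

lemma coeff_sum_C_mul_X_pow {d : ℕ} (f : Fin (d+1) → K) (m : ℕ) :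
    (∑ j : Fin (d+1), Polynomial.C (f j) * Polynomial.X ^ (j:ℕ)).coeff m =
      if hm : m < d+1 then f ⟨m, hm⟩ else 0 := by
  rw [Polynomial.finset_sum_coeff]
  simp only [Polynomial.coeff_C_mul, Polynomial.coeff_X_pow, mul_ite, mul_one, mul_zero]
  by_cases hm : m < d+1
  · rw [dif_pos hm, Finset.sum_eq_single (⟨m, hm⟩ : Fin (d+1))]
    · simp
    · intro j _ hj
      rw [if_neg]
      intro h
      exact hj (Fin.ext h.symm)
    · simp
  · rw [dif_neg hm]
    apply Finset.sum_eq_zero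
    intro j _
    rw [if_neg]
    intro h
    exact hm (h ▸ j.isLt)

lemma flatv_apply_eq (d : ℕ) (hn : 0 < n) (v : Fin (n*(d+1)) → K) (i : Fin n) :
    flatv d v i = ∑ j : Fin (d+1), Polynomial.C (v (idxE n d hn (i, j))) * Polynomial.X ^ (j:ℕ) :=
  rfl

lemma flatv_coeff (d : ℕ) (hn : 0 < n) (v : Fin (n*(d+1)) → K) (i : Fin n) (m : ℕ) :
    (flatv d v i).coeff m =
      if hm : m < d+1 then v (idxE n d hn (i, ⟨m, hm⟩)) else 0 := by
  rw [flatv_apply_eq d hn v i, coeff_sum_C_mul_X_pow]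

lemma natDegree_flatv_le (d : ℕ) (hn : 0 < n) (v : Fin (n*(d+1)) → K) (i : Fin n) :
    (flatv d v i).natDegree ≤ d := by
  rw [Polynomial.natDegree_le_iff_coeff_eq_zero]
  intro m hm
  rw [flatv_coeff d hn v i m, dif_neg (by omega)]

/-- The key identity: `(A v)_k` is the `k`-th coefficient of `∑ i, a i * (v^♭) i`. -/
lemma mulVec_coefA_eq (hn : 0 < n) (a : Fin n → K[X]) (d : ℕ)
    (v : Fin (n*(d+1)) → K) (k : Fin (2*d+1)) :
    (coefA d hn a).mulVec v k = (∑ i, a i * flatv d v i).coeff (k:ℕ) := by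
  have hR : (∑ i, a i * flatv d v i).coeff (k:ℕ) =
      ∑ i : Fin n, ∑ j : Fin (d+1),
        (if (j:ℕ) ≤ (k:ℕ) then (a i).coeff ((k:ℕ) - (j:ℕ)) else 0) * v (idxE n d hn (i, j)) := by
    rw [Polynomial.finset_sum_coeff]
    refine Finset.sum_congr rfl fun i _ => ?_
    rw [flatv_apply_eq d hn v i, Finset.mul_sum, Polynomial.finset_sum_coeff]
    refine Finset.sum_congr rfl fun j _ => ?_
    have : a i * (Polynomial.C (v (idxE n d hn (i, j))) * Polynomial.X ^ (j:ℕ)) =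
        (a i * Polynomial.C (v (idxE n d hn (i, j)))) * Polynomial.X ^ (j:ℕ) := by ring
    rw [this, Polynomial.coeff_mul_X_pow', Polynomial.coeff_mul_C]
    split
    · ring
    · simp
  rw [hR]
  show ∑ ℓ, coefA d hn a k ℓ * v ℓ = _
  rw [← Equiv.sum_comp (idxE n d hn) (fun ℓ => coefA d hn a k ℓ * v ℓ), Fintype.sum_prod_type]
  refine Finset.sum_congr rfl fun i _ => Finset.sum_congr rfl fun j _ => ?_
  congr 1
  have hval : ((idxE n d hn (i, j) : Fin (n*(d+1))) : ℕ) = (i:ℕ) + (j:ℕ)*n := rfl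
  have hdiv : ((idxE n d hn (i, j) : Fin (n*(d+1))) : ℕ) / n = (j:ℕ) := by
    rw [hval, Nat.add_mul_div_right _ _ hn, Nat.div_eq_of_lt i.isLt, Nat.zero_add]
  have hmod : ((idxE n d hn (i, j) : Fin (n*(d+1))) : ℕ) % n = (i:ℕ) := by
    rw [hval, Nat.add_mul_mod_self_right, Nat.mod_eq_of_lt i.isLt]
  show (if ((idxE n d hn (i, j) : Fin (n*(d+1))) : ℕ) / n ≤ (k:ℕ) then
      (a ⟨((idxE n d hn (i, j) : Fin (n*(d+1))) : ℕ) % n, Nat.mod_lt _ hn⟩).coeff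
        ((k:ℕ) - ((idxE n d hn (i, j) : Fin (n*(d+1))) : ℕ) / n) else 0) = _
  have hi : (⟨((idxE n d hn (i, j) : Fin (n*(d+1))) : ℕ) % n, Nat.mod_lt _ hn⟩ : Fin n) = i :=
    Fin.ext hmod
  rw [hdiv, hi]

end Aux
section Aux2

variable {K : Type*} [Field K] {n : ℕ}

lemma mem_syz_iff (a : Fin n → K[X]) (h : Fin n → K[X]) :
    h ∈ syz a ↔ ∑ i, a i * h i = 0 := Iff.rfl

lemma coeff_sum_mul_eq_zero {a h : Fin n → K[X]} {d e m : ℕ}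
    (ha : ∀ i, (a i).natDegree ≤ d) (hh : ∀ i, (h i).natDegree ≤ e) (hm : d + e < m) :
    (∑ i, a i * h i).coeff m = 0 := by
  rw [Polynomial.finset_sum_coeff]
  refine Finset.sum_eq_zero fun i _ => ?_
  refine Polynomial.coeff_eq_zero_of_natDegree_lt (lt_of_le_of_lt ?_ hm)
  exact Polynomial.natDegree_mul_le.trans (add_le_add (ha i) (hh i))

lemma natDegree_a_le {a : Fin n → K[X]} {d : ℕ} (hd : vdeg a = d) (i : Fin n) :
    (a i).natDegree ≤ d := by
  rw [← hd]
  exact Finset.le_sup (f := fun i => (a i).natDegree) (Finset.mem_univ i)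

/-- If `A v = 0` then `v^♭ ∈ syz a`. -/
lemma flatv_mem_syz (hn : 0 < n) {a : Fin n → K[X]} {d : ℕ} (hd : vdeg a = d)
    {v : Fin (n*(d+1)) → K} (hv : (coefA d hn a).mulVec v = 0) :
    flatv d v ∈ syz a := by
  rw [mem_syz_iff]
  ext m
  rw [Polynomial.coeff_zero]
  by_cases hm : m < 2*d+1
  · have := congrFun hv ⟨m, hm⟩
    rw [mulVec_coefA_eq hn a d v ⟨m, hm⟩] at this
    exact this
  · exact coeff_sum_mul_eq_zero (natDegree_a_le hd) (natDegree_flatv_le d hn v) (by omega)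

/-- `flatv` as a `K`-linear map. -/
def flatF (d : ℕ) : (Fin (n*(d+1)) → K) →ₗ[K] (Fin n → K[X]) where
  toFun := flatv d
  map_add' := fun v w => by
    funext i
    show flatv d (v + w) i = flatv d v i + flatv d w i
    unfold flatv
    rw [← Finset.sum_add_distrib]
    refine Finset.sum_congr rfl fun j _ => ?_
    rw [Pi.add_apply, Polynomial.C_add, add_mul]
  map_smul' := fun c v => by
    funext i
    show flatv d (c • v) i = (c • flatv d v) i
    unfold flatv
    rw [Pi.smul_apply, Finset.smul_sum]
    refine Finset.sum_congr rfl fun j _ => ?_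
    rw [Pi.smul_apply, smul_eq_mul, Polynomial.C_mul, Polynomial.smul_eq_C_mul, mul_assoc]

/-- A syzygy of degree at most `d` lies in the `K[X]`-span of the flats of a spanning
set of `ker A`. -/
lemma mem_span_of_deg_le (hn : 0 < n) {a : Fin n → K[X]} {d : ℕ} (hd : vdeg a = d)
    {l : ℕ} {b : Fin l → Fin (n*(d+1)) → K}
    (hspan : Submodule.span K (Set.range b) =
      LinearMap.ker (Matrix.mulVecLin (coefA d hn a)))
    {h : Fin n → K[X]} (hsyz : ∑ i, a i * h i = 0) (hdeg : ∀ i, (h i).natDegree ≤ d) :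
    h ∈ Submodule.span K[X] (Set.range fun j => flatv d (b j)) := by
  set v : Fin (n*(d+1)) → K :=
    fun ℓ => (h ((idxE n d hn).symm ℓ).1).coeff (((idxE n d hn).symm ℓ).2) with hv
  have hfv : flatv d v = h := by
    funext i
    rw [flatv_apply_eq d hn v i]
    have hcv : ∀ j : Fin (d+1), v (idxE n d hn (i, j)) = (h i).coeff (j:ℕ) := by
      intro j
      rw [hv]
      simp only [Equiv.symm_apply_apply]
    calc (∑ j : Fin (d+1), Polynomial.C (v (idxE n d hn (i, j))) * Polynomial.X ^ (j:ℕ))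
        = ∑ j : Fin (d+1), Polynomial.C ((h i).coeff (j:ℕ)) * Polynomial.X ^ (j:ℕ) :=
          Finset.sum_congr rfl fun j _ => by rw [hcv j]
      _ = ∑ j ∈ Finset.range (d+1), Polynomial.monomial j ((h i).coeff j) := by
          rw [← Fin.sum_univ_eq_sum_range
            (fun j => Polynomial.monomial j ((h i).coeff j)) (d+1)]
          exact Finset.sum_congr rfl fun j _ => Polynomial.C_mul_X_pow_eq_monomial
      _ = h i := (Polynomial.as_sum_range' (h i) (d+1) (Nat.lt_succ_of_le (hdeg i))).symm
  have hker : v ∈ LinearMap.ker (Matrix.mulVecLin (coefA d hn a)) := by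
    rw [LinearMap.mem_ker, Matrix.mulVecLin_apply]
    funext k
    rw [mulVec_coefA_eq hn a d v ⟨(k:ℕ), k.isLt⟩]
    show (∑ i, a i * flatv d v i).coeff (k:ℕ) = (0 : Fin (2*d+1) → K) k
    rw [hfv, hsyz]
    simp
  rw [← hspan] at hker
  have hmap : flatF d v ∈ Submodule.map (flatF d) (Submodule.span K (Set.range b)) :=
    Submodule.mem_map_of_mem hker
  rw [Submodule.map_span] at hmap
  have himg : (flatF d) '' Set.range b = Set.range fun j => flatv d (b j) := by
    rw [← Set.range_comp]
    rfl
  rw [himg] at hmap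
  have : h ∈ Submodule.span K (Set.range fun j => flatv d (b j)) := by
    rw [← hfv]; exact hmap
  exact Submodule.span_le_restrictScalars K K[X] _ this

end Aux2
section Aux3

variable {K : Type*} [Field K] {n : ℕ}

/-- Degree reduction: a syzygy of degree `e > d` has a companion syzygy of degree `≤ d`
whose `d`-th coefficients are the `e`-th coefficients of `h`. -/
lemma exists_companion_syz {a : Fin n → K[X]} {d : ℕ}
    (hble : ∀ i, (a i).natDegree ≤ d)
    (hex : ∃ i₀, (a i₀).natDegree = d ∧ a i₀ ≠ 0)
    {e : ℕ} (he : d < e) {h : Fin n → K[X]}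
    (hsyz : ∑ i, a i * h i = 0) (hdeg : ∀ i, (h i).natDegree ≤ e) :
    ∃ z : Fin n → K[X], (∑ i, a i * z i = 0) ∧ (∀ i, (z i).natDegree ≤ d) ∧
      (∀ i, (z i).coeff d = (h i).coeff e) := by
  classical
  set δ := e - d with hδ
  have hδ1 : 1 ≤ δ := by omega
  have hδe : δ + d = e := by omega
  -- the top slice q
  set q : Fin n → K[X] := fun i =>
    ∑ j : Fin (d+1), Polynomial.C ((h i).coeff (δ + (j:ℕ))) * Polynomial.X ^ (j:ℕ) with hq
  have hqc : ∀ (i) (m : ℕ), (q i).coeff m = if m < d+1 then (h i).coeff (δ + m) else 0 := by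
    intro i m
    rw [hq]
    rw [coeff_sum_C_mul_X_pow (fun j : Fin (d+1) => (h i).coeff (δ + (j:ℕ))) m]
    by_cases hm : m < d+1
    · rw [dif_pos hm, if_pos hm]
    · rw [dif_neg hm, if_neg hm]
  have hqd : ∀ i, (q i).natDegree ≤ d := by
    intro i
    rw [Polynomial.natDegree_le_iff_coeff_eq_zero]
    intro m hm
    rw [hqc, if_neg (by omega)]
  have hqtop : ∀ i, (q i).coeff d = (h i).coeff e := by
    intro i
    rw [hqc, if_pos (by omega), hδe]
  -- the remainder r
  set r : Fin n → K[X] := fun i => h i - Polynomial.X ^ δ * q i with hr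
  have hrc : ∀ (i) (m : ℕ), δ ≤ m → (r i).coeff m = 0 := by
    intro i m hm
    rw [hr]
    simp only [Polynomial.coeff_sub]
    rw [mul_comm, Polynomial.coeff_mul_X_pow', if_pos hm, hqc]
    by_cases h2 : m - δ < d + 1
    · rw [if_pos h2]
      have h3 : δ + (m - δ) = m := by omega
      rw [h3, sub_self]
    · rw [if_neg h2]
      have h3 : (h i).coeff m = 0 :=
        Polynomial.coeff_eq_zero_of_natDegree_lt (lt_of_le_of_lt (hdeg i) (by omega))
      rw [h3, sub_zero]
  have hrd : ∀ i, (r i).natDegree ≤ δ - 1 := by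
    intro i
    rw [Polynomial.natDegree_le_iff_coeff_eq_zero]
    intro m hm
    exact hrc i m (by omega)
  -- s := a · q vanishes in degrees ≥ d
  set s : K[X] := ∑ i, a i * q i with hs
  have hXs : Polynomial.X ^ δ * s = - ∑ i, a i * r i := by
    have h1 : ∀ i : Fin n, Polynomial.X ^ δ * (a i * q i) = a i * h i - a i * r i := by
      intro i
      rw [hr]
      ring
    rw [hs, Finset.mul_sum, Finset.sum_congr rfl fun i _ => h1 i, Finset.sum_sub_distrib,
      hsyz, zero_sub]
  have hsc : ∀ m : ℕ, d ≤ m → s.coeff m = 0 := by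
    intro m hm
    have h1 : (Polynomial.X ^ δ * s).coeff (m + δ) = s.coeff m := Polynomial.coeff_X_pow_mul s δ m
    rw [hXs] at h1
    rw [← h1, Polynomial.coeff_neg, coeff_sum_mul_eq_zero hble hrd (by omega), neg_zero]
  -- the principal generator of the ideal of the `a i`
  set I : Ideal K[X] := Ideal.span (Set.range a) with hI
  set g : K[X] := Submodule.IsPrincipal.generator I with hg
  have hIg : Ideal.span {g} = I := Ideal.span_singleton_generator I
  have hmem : ∀ i, a i ∈ I := fun i => Ideal.subset_span (Set.mem_range_self i)
  have hgdvd : ∀ i, g ∣ a i := fun i => by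
    rw [← Ideal.mem_span_singleton, hIg]; exact hmem i
  obtain ⟨i₀, hi₀d, hi₀0⟩ := hex
  have hg0 : g ≠ 0 := by
    intro h0
    apply hi₀0
    have h1 := hgdvd i₀
    rw [h0] at h1
    exact zero_dvd_iff.mp h1
  have hgdvd' : ∀ i, ∃ c, a i = g * c := fun i => hgdvd i
  choose t ht using hgdvd'
  have hgmem : g ∈ Ideal.span (Set.range a) := by
    rw [hI] at *
    exact Submodule.IsPrincipal.generator_mem _
  obtain ⟨u, hu⟩ := Ideal.mem_span_range_iff_exists_fun.mp hgmem
  have hbez : ∑ i, u i * t i = 1 := by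
    refine mul_left_cancel₀ hg0 ?_
    rw [mul_one, Finset.mul_sum]
    calc ∑ i, g * (u i * t i) = ∑ i, u i * a i := by
          refine Finset.sum_congr rfl fun i _ => ?_
          rw [ht i]; ring
      _ = g := hu
  set dg := g.natDegree with hdg
  have ht₀0 : t i₀ ≠ 0 := by
    intro h0
    apply hi₀0
    rw [ht i₀, h0, mul_zero]
  have hdgd : dg + (t i₀).natDegree = d := by
    rw [← hi₀d, ht i₀, Polynomial.natDegree_mul hg0 ht₀0]
  set D := d - dg with hD
  have htd₀ : (t i₀).natDegree = D := by omega
  have hDd : D ≤ d := by omega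
  have htle : ∀ i, (t i).natDegree ≤ D := by
    intro i
    by_cases h0 : t i = 0
    · rw [h0, Polynomial.natDegree_zero]; exact Nat.zero_le _
    · have h1 : (a i).natDegree = dg + (t i).natDegree := by
        rw [ht i, Polynomial.natDegree_mul hg0 h0]
      have h2 := hble i
      omega
  -- p := s / g
  have hsI : s ∈ I := by
    rw [hs]
    refine Ideal.sum_mem I fun i _ => ?_
    rw [mul_comm]
    exact Ideal.mul_mem_left I (q i) (hmem i)
  have hgs : g ∣ s := by rw [← Ideal.mem_span_singleton, hIg]; exact hsI
  obtain ⟨p, hp⟩ : ∃ p, s = g * p := hgs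
  have hpdeg : p ≠ 0 → dg + p.natDegree < d := by
    intro hp0
    have hs0 : s ≠ 0 := by rw [hp]; exact mul_ne_zero hg0 hp0
    have hnds : s.natDegree = dg + p.natDegree := by
      rw [hp, Polynomial.natDegree_mul hg0 hp0]
    by_contra hge
    push_neg at hge
    have h1 := hsc s.natDegree (by omega)
    exact (Polynomial.leadingCoeff_ne_zero.mpr hs0) h1
  have hpD : ∀ m : ℕ, D ≤ m → p.coeff m = 0 := by
    intro m hm
    by_cases hp0 : p = 0
    · rw [hp0, Polynomial.coeff_zero]
    · exact Polynomial.coeff_eq_zero_of_natDegree_lt (by have := hpdeg hp0; omega)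
  by_cases hp0 : p = 0
  · refine ⟨q, ?_, hqd, hqtop⟩
    show ∑ i, a i * q i = 0
    rw [← hs, hp, hp0, mul_zero]
  · have hD1 : 1 ≤ D := by have := hpdeg hp0; omega
    set c := (t i₀).leadingCoeff with hc
    have hc0 : c ≠ 0 := Polynomial.leadingCoeff_ne_zero.mpr ht₀0
    set M := t i₀ * Polynomial.C c⁻¹ with hM
    have hMm : M.Monic := Polynomial.monic_mul_leadingCoeff_inv ht₀0
    have hMd : M.natDegree = D := by
      rw [hM, hc, Polynomial.natDegree_mul_leadingCoeff_inv _ ht₀0, htd₀]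
    set w : Fin n → K[X] := fun i =>
      if i = i₀ then
        p * u i₀ + Polynomial.C c⁻¹ * ∑ j ∈ Finset.univ.erase i₀, ((p * u j) /ₘ M) * t j
      else (p * u i) %ₘ M with hw
    have hwmod : ∀ i, i ≠ i₀ → w i = (p * u i) %ₘ M := by
      intro i hi
      rw [hw]
      exact if_neg hi
    have hsum : ∑ i, t i * w i = p := by
      rw [← Finset.add_sum_erase _ _ (Finset.mem_univ i₀)]
      have h1 : ∀ j ∈ Finset.univ.erase i₀,
          t j * w j = t j * (p * u j) - M * ((p * u j) /ₘ M) * t j := by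
        intro j hj
        rw [hwmod j (Finset.ne_of_mem_erase hj)]
        have h2 : (p * u j) %ₘ M = p * u j - M * ((p * u j) /ₘ M) :=
          eq_sub_of_add_eq (Polynomial.modByMonic_add_div (p * u j) M)
        rw [h2]; ring
      rw [Finset.sum_congr rfl h1, Finset.sum_sub_distrib]
      have h3w : w i₀ = p * u i₀ +
          Polynomial.C c⁻¹ * ∑ j ∈ Finset.univ.erase i₀, ((p * u j) /ₘ M) * t j := by
        simp [hw]
      have h3 : t i₀ * w i₀ = t i₀ * (p * u i₀) +
          ∑ j ∈ Finset.univ.erase i₀, M * ((p * u j) /ₘ M) * t j := by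
        rw [h3w, mul_add]
        congr 1
        rw [← mul_assoc, ← hM, Finset.mul_sum]
        exact Finset.sum_congr rfl fun j _ => by ring
      rw [h3]
      have h4 : ∀ A B S : K[X], A + S + (B - S) = A + B := fun A B S => by ring
      rw [h4]
      rw [Finset.add_sum_erase _ (fun j => t j * (p * u j)) (Finset.mem_univ i₀)]
      calc ∑ i, t i * (p * u i) = p * ∑ i, u i * t i := by
            rw [Finset.mul_sum]
            exact Finset.sum_congr rfl fun i _ => by ring
        _ = p := by rw [hbez, mul_one]
    have hwe : ∀ i, i ≠ i₀ → (w i).natDegree ≤ D - 1 := by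
      intro i hi
      rw [hwmod i hi]
      by_cases h0 : (p * u i) %ₘ M = 0
      · rw [h0, Polynomial.natDegree_zero]; exact Nat.zero_le _
      · have hlt := Polynomial.degree_modByMonic_lt (p * u i) hMm
        rw [Polynomial.degree_eq_natDegree h0, Polynomial.degree_eq_natDegree hMm.ne_zero,
          hMd] at hlt
        have h2 : ((p * u i) %ₘ M).natDegree < D := by exact_mod_cast hlt
        omega
    have hw₀ : (w i₀).natDegree ≤ D - 1 := by
      have hkey : t i₀ * w i₀ = p - ∑ j ∈ Finset.univ.erase i₀, t j * w j := by
        rw [← hsum, ← Finset.add_sum_erase _ (fun i => t i * w i) (Finset.mem_univ i₀)]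
        ring
      by_cases h0 : w i₀ = 0
      · rw [h0, Polynomial.natDegree_zero]; exact Nat.zero_le _
      · have hnd : (t i₀ * w i₀).natDegree ≤ 2*D - 1 := by
          rw [hkey]
          refine Polynomial.natDegree_le_iff_coeff_eq_zero.mpr fun m hm => ?_
          have hpc : p.coeff m = 0 := hpD m (by omega)
          have hz : ∀ j ∈ Finset.univ.erase i₀, (t j * w j).coeff m = 0 := by
            intro j hj
            refine Polynomial.coeff_eq_zero_of_natDegree_lt
              (lt_of_le_of_lt Polynomial.natDegree_mul_le ?_)
            have h5 := htle j
            have h6 := hwe j (Finset.ne_of_mem_erase hj)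
            omega
          rw [Polynomial.coeff_sub, hpc, Polynomial.finset_sum_coeff,
            Finset.sum_eq_zero hz, sub_zero]
        have hmul : (t i₀ * w i₀).natDegree = D + (w i₀).natDegree := by
          rw [Polynomial.natDegree_mul ht₀0 h0, htd₀]
        omega
    have hwD : ∀ i, (w i).natDegree ≤ D - 1 := by
      intro i
      by_cases hi : i = i₀
      · rw [hi]; exact hw₀
      · exact hwe i hi
    refine ⟨fun i => q i - w i, ?_, ?_, ?_⟩
    · have h7 : ∑ i, a i * (q i - w i) = s - ∑ i, a i * w i := by
        rw [hs, ← Finset.sum_sub_distrib]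
        exact Finset.sum_congr rfl fun i _ => by ring
      rw [h7]
      have h8 : ∑ i, a i * w i = g * p := by
        calc ∑ i, a i * w i = g * ∑ i, t i * w i := by
              rw [Finset.mul_sum]
              exact Finset.sum_congr rfl fun i _ => by rw [ht i]; ring
          _ = g * p := by rw [hsum]
      rw [h8, hp, sub_self]
    · intro i
      refine le_trans (Polynomial.natDegree_sub_le _ _) (max_le (hqd i) ?_)
      have := hwD i
      omega
    · intro i
      rw [Polynomial.coeff_sub, hqtop i]
      have h9 : (w i).coeff d = 0 :=
        Polynomial.coeff_eq_zero_of_natDegree_lt (by have := hwD i; omega)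
      rw [h9, sub_zero]

end Aux3
/-- Lemma: a basis of `ker A` generates the syzygy module.  If
`b_1, …, b_l` is a `K`-basis of the kernel of the coefficient matrix `A`, then `syz a` is
generated as a `K[s]`-module by `b_1^♭, …, b_l^♭`. -/
theorem syz_generated_by_flat_of_ker_basis {K : Type*} [Field K] {n : ℕ} (hn : 1 < n)
    (a : Fin n → K[X]) (ha : a ≠ 0) {d : ℕ} (hd : vdeg a = d)
    {l : ℕ} (b : Fin l → Fin (n*(d+1)) → K)
    (hli : LinearIndependent K b)
    (hspan : Submodule.span K (Set.range b) =
      LinearMap.ker (Matrix.mulVecLin (coefA d (Nat.zero_lt_of_lt hn) a))) :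
    syz a = Submodule.span K[X] (Set.range fun j => flatv d (b j)) := by
  have hn0 : 0 < n := Nat.zero_lt_of_lt hn
  have hble : ∀ i, (a i).natDegree ≤ d := natDegree_a_le hd
  have hex : ∃ i₀, (a i₀).natDegree = d ∧ a i₀ ≠ 0 := by
    haveI : Nonempty (Fin n) := ⟨⟨0, hn0⟩⟩
    obtain ⟨i₁, -, hi₁⟩ := Finset.exists_mem_eq_sup Finset.univ Finset.univ_nonempty
      (fun i => (a i).natDegree)
    have hne : ∃ j, a j ≠ 0 := by
      by_contra hall
      push_neg at hall
      exact ha (funext fun j => hall j)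
    obtain ⟨j, hj⟩ := hne
    by_cases h0 : a i₁ = 0
    · have hd0 : d = 0 := by
        rw [← hd]
        show Finset.univ.sup (fun i => (a i).natDegree) = 0
        rw [hi₁, h0, Polynomial.natDegree_zero]
      refine ⟨j, ?_, hj⟩
      have := hble j
      omega
    · refine ⟨i₁, ?_, h0⟩
      rw [← hd]
      exact hi₁.symm
  apply le_antisymm
  · intro h hh
    rw [mem_syz_iff] at hh
    have main : ∀ e : ℕ, d ≤ e → ∀ h : Fin n → K[X], (∑ i, a i * h i = 0) →
        (∀ i, (h i).natDegree ≤ e) →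
        h ∈ Submodule.span K[X] (Set.range fun j => flatv d (b j)) := by
      refine Nat.le_induction ?_ ?_
      · intro h hsyz hdeg
        exact mem_span_of_deg_le hn0 hd hspan hsyz hdeg
      · intro e hde IH h hsyz hdeg
        obtain ⟨z, hz1, hz2, hz3⟩ :=
          exists_companion_syz hble hex (Nat.lt_succ_of_le hde) hsyz hdeg
        have hzSpan : z ∈ Submodule.span K[X] (Set.range fun j => flatv d (b j)) :=
          mem_span_of_deg_le hn0 hd hspan hz1 hz2
        set δ := e + 1 - d with hδ
        set h' : Fin n → K[X] := fun i => h i - Polynomial.X ^ δ * z i with hh'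
        have hsyz' : ∑ i, a i * h' i = 0 := by
          have h1 : ∀ i : Fin n, a i * h' i = a i * h i - Polynomial.X ^ δ * (a i * z i) := by
            intro i
            rw [hh']
            ring
          rw [Finset.sum_congr rfl fun i _ => h1 i, Finset.sum_sub_distrib, hsyz,
            ← Finset.mul_sum, hz1, mul_zero, sub_zero]
        have hdeg' : ∀ i, (h' i).natDegree ≤ e := by
          intro i
          rw [Polynomial.natDegree_le_iff_coeff_eq_zero]
          intro m hm
          rw [hh']
          simp only [Polynomial.coeff_sub]
          rw [mul_comm, Polynomial.coeff_mul_X_pow', if_pos (by omega)]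
          by_cases hme : m = e + 1
          · subst hme
            have h2 : e + 1 - δ = d := by omega
            rw [h2, hz3 i, sub_self]
          · have hm2 : e + 1 < m := by omega
            rw [Polynomial.coeff_eq_zero_of_natDegree_lt (lt_of_le_of_lt (hdeg i) hm2),
              Polynomial.coeff_eq_zero_of_natDegree_lt (lt_of_le_of_lt (hz2 i) (by omega)),
              sub_self]
        have hmem' := IH h' hsyz' hdeg'
        have hrepr : h = fun i => h' i + Polynomial.X ^ δ * z i := by
          funext i
          rw [hh']
          ring
        rw [hrepr]
        have hz4 : (fun i => Polynomial.X ^ δ * z i) = (Polynomial.X ^ δ : K[X]) • z := rfl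
        exact Submodule.add_mem _ hmem'
          (show (fun i => Polynomial.X ^ δ * z i) ∈ _ from by rw [hz4]; exact Submodule.smul_mem _ _ hzSpan)
    exact main (max d (vdeg h)) (le_max_left _ _) h hh
      (fun i => le_trans
        (Finset.le_sup (f := fun i => (h i).natDegree) (Finset.mem_univ i))
        (le_max_right _ _))
  · apply Submodule.span_le.mpr
    rintro x ⟨j, rfl⟩
    have hbj : b j ∈ LinearMap.ker (Matrix.mulVecLin (coefA d hn0 a)) := by
      rw [← hspan]
      exact Submodule.subset_span (Set.mem_range_self j)
    rw [LinearMap.mem_ker, Matrix.mulVecLin_apply] at hbj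
    exact flatv_mem_syz hn0 hd hbj
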